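/- (Main computation, Theorem 3 of the paper) Let Ξ = x_1 * x_2 * ··· * x_n (BCH product) and let -Ξ^{-1} denote the ⋄-inverse of -Ξ (with unit x_0 = -\sum_k x_k). Then -Ξ^{-1} + x_0 s(Ξ) x_0 = x_0 - \sum_{k>l} x_k x_l + \sum_{k=1}^n s(x_k) x_k^2 = -\sum_{k>l} x_k x_l + \sum_{k=1}^n x_k^2/(e^{-x_k}-1). -/

import Mathlib

/-- Words in the generators `x_1, …, x_n` (indexed by `Fin n`). -/
abbrev Word (n : ℕ) := List (Fin n)

/-- The completed tensor algebra `T = ∏ₘ H^{⊗m}` on the basis `x_1, …, x_n` of `H`,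
modeled as the space of ℚ-valued coefficient functions on words in the generators. -/
abbrev T (n : ℕ) : Type := Word n → ℚ

/-- The generator `x_k` as an element of `T n`. -/
def xgen {n : ℕ} (k : Fin n) : T n := fun w => if w = [k] then 1 else 0

/-- `x₀ = -∑ₖ xₖ`. -/
def x0 (n : ℕ) : T n := -∑ k : Fin n, xgen k

/-- The operation `⋄` on `T_{≥1}`, determined on monomials by
`(x_{i_1}⋯x_{i_{l-1}}x_{i_l}) ⋄ (x_{j_1}x_{j_2}⋯x_{j_m})
  = -δ_{i_l j_1} x_{i_1}⋯x_{i_{l-1}} x_{j_1}x_{j_2}⋯x_{j_m}`,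
extended bilinearly and continuously. -/
def dia {n : ℕ} (f g : T n) : T n :=
  fun w => -∑ i ∈ Finset.range w.length, f (w.take (i + 1)) * g (w.drop i)

/-- `f ∈ T_{≥p}`: all components of degree `< p` vanish. -/
def degGE {n : ℕ} (p : ℕ) (f : T n) : Prop := ∀ w : Word n, w.length < p → f w = 0

/-- The unit `1 ∈ T n` for the tensor product. -/
def oneT {n : ℕ} : T n := fun w => if w = [] then 1 else 0

/-- The (completed) tensor product on `T n`: concatenation product. -/
def mulT {n : ℕ} (f g : T n) : T n :=
  fun w => ∑ i ∈ Finset.range (w.length + 1), f (w.take i) * g (w.drop i)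

/-- Powers with respect to the tensor product. -/
def powT {n : ℕ} (f : T n) : ℕ → T n
  | 0 => oneT
  | m + 1 => mulT f (powT f m)

/-- Ordered product of a list of elements of `T n`. -/
def prodT {n : ℕ} : List (T n) → T n
  | [] => oneT
  | a :: l => mulT a (prodT l)

/-- Substitution of an element `a ∈ T_{≥1}` into a formal power series `F ∈ ℚ[[z]]`:
`F(a) = ∑ₘ (coeff m F) aᵐ`, a finite sum in each degree. -/
noncomputable def substT {n : ℕ} (F : PowerSeries ℚ) (a : T n) : T n :=
  fun w => ∑ m ∈ Finset.range (w.length + 1), PowerSeries.coeff m F * powT a m w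

/-- The exponential `e^a` for `a ∈ T_{≥1}`. -/
noncomputable def expT {n : ℕ} (a : T n) : T n := substT (PowerSeries.exp ℚ) a

/-- The power series `log(1+z) = ∑_{m≥1} (-1)^{m+1} zᵐ/m`. -/
def logSeries : PowerSeries ℚ :=
  PowerSeries.mk fun m => if m = 0 then 0 else (-1 : ℚ) ^ (m + 1) / (m : ℚ)

/-- The logarithm `log a` for `a ∈ 1 + T_{≥1}`. -/
noncomputable def logT {n : ℕ} (a : T n) : T n := substT logSeries (a - oneT)

/-- The Baker–Campbell–Hausdorff product `Ξ = x₁ * x₂ * ⋯ * xₙ = log(e^{x₁}e^{x₂}⋯e^{xₙ})`. -/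
noncomputable def Xi (n : ℕ) : T n := logT (prodT ((List.finRange n).map fun k => expT (xgen k)))

/-- The continuous algebra automorphism `Q` of `T n` with `Q(x_k) = -x_{n-k+1}`
(reversing and negating the basis). -/
def Qauto {n : ℕ} (f : T n) : T n := fun w => (-1 : ℚ) ^ w.length * f (w.map Fin.rev)

/-- `s(z) = 1/(e^{-z}-1) + 1/z` is characterized in `ℚ[[z]]` by the equation
`s(z) · (z·(e^{-z}-1)) = z + (e^{-z}-1)`. -/
def sSpec (s : PowerSeries ℚ) : Prop :=
  s * (PowerSeries.X * (PowerSeries.rescale (-1) (PowerSeries.exp ℚ) - 1)) =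
    PowerSeries.X + (PowerSeries.rescale (-1) (PowerSeries.exp ℚ) - 1)

/-- `g(z) = z/(e^{-z}-1)` is characterized in `ℚ[[z]]` by `g(z)·(e^{-z}-1) = z`. -/
def gSpec (g : PowerSeries ℚ) : Prop :=
  g * (PowerSeries.rescale (-1) (PowerSeries.exp ℚ) - 1) = PowerSeries.X

open Finset

lemma sum_triangle (N : ℕ) (F : ℕ → ℕ → ℚ) :
    ∑ i ∈ range N, ∑ j ∈ range (i+1), F i j
      = ∑ j ∈ range N, ∑ d ∈ range (N - j), F (j+d) j := by
  have h := Finset.sum_Ico_Ico_comm 0 N (fun i j => F j i)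
  simp only [Nat.Ico_zero_eq_range] at h
  rw [← h]
  exact Finset.sum_congr rfl fun j hj => by rw [Finset.sum_Ico_eq_sum_range]

variable {n : ℕ}

lemma oneT_apply (w : Word n) : (oneT : T n) w = if w = [] then 1 else 0 := rfl

lemma mulT_one (f : T n) : mulT f oneT = f := by
  funext w
  have : ∀ i ∈ range (w.length + 1), f (w.take i) * (oneT : T n) (w.drop i)
      = if i = w.length then f w else 0 := by
    intro i hi
    rw [mem_range] at hi
    by_cases h : i = w.length
    · subst h; simp [oneT_apply]
    · have : w.drop i ≠ [] := by
        simp only [ne_eq, List.drop_eq_nil_iff]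
        omega
      simp [oneT_apply, this, h]
  rw [mulT, Finset.sum_congr rfl this, Finset.sum_ite_eq' (range (w.length+1)) w.length]
  simp

lemma one_mulT (f : T n) : mulT oneT f = f := by
  funext w
  have : ∀ i ∈ range (w.length + 1), (oneT : T n) (w.take i) * f (w.drop i)
      = if i = 0 then f w else 0 := by
    intro i hi
    rw [mem_range] at hi
    by_cases h : i = 0
    · subst h; simp [oneT_apply]
    · have : w.take i ≠ [] := by
        intro hnil
        have h2 := congrArg List.length hnil
        simp only [List.length_take, List.length_nil] at h2
        rcases Nat.min_eq_zero_iff.mp h2 with h' | h' <;> omega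
      simp [oneT_apply, this, h]
  rw [mulT, Finset.sum_congr rfl this, Finset.sum_ite_eq' (range (w.length+1)) 0]
  simp

lemma mulT_assoc (f g h : T n) : mulT (mulT f g) h = mulT f (mulT g h) := by
  funext w
  show ∑ i ∈ range (w.length + 1), (mulT f g) (w.take i) * h (w.drop i) = _
  have step1 : ∀ i ∈ range (w.length + 1), (mulT f g) (w.take i) * h (w.drop i)
      = ∑ j ∈ range (i+1), f (w.take j) * g ((w.drop j).take (i - j)) * h (w.drop i) := by
    intro i hi
    rw [mem_range, Nat.lt_succ_iff] at hi
    rw [mulT, List.length_take, min_eq_left hi, Finset.sum_mul]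
    refine Finset.sum_congr rfl fun j hj => ?_
    rw [mem_range, Nat.lt_succ_iff] at hj
    rw [List.take_take, min_eq_left hj, List.drop_take]
  rw [Finset.sum_congr rfl step1, sum_triangle]
  refine Finset.sum_congr rfl fun j hj => ?_
  rw [mem_range, Nat.lt_succ_iff] at hj
  rw [mulT, Finset.mul_sum, List.length_drop]
  have hlen : w.length + 1 - j = w.length - j + 1 := by omega
  rw [hlen]
  refine Finset.sum_congr rfl fun d hd => ?_
  rw [Nat.add_sub_cancel_left, ← List.drop_drop, mul_assoc]

lemma mulT_add_left (f g h : T n) : mulT (f + g) h = mulT f h + mulT g h := by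
  funext w; simp [mulT, add_mul, Finset.sum_add_distrib]

lemma mulT_add_right (f g h : T n) : mulT f (g + h) = mulT f g + mulT f h := by
  funext w; simp [mulT, mul_add, Finset.sum_add_distrib]

lemma mulT_neg_left (f g : T n) : mulT (-f) g = -mulT f g := by
  funext w; simp [mulT]

lemma mulT_neg_right (f g : T n) : mulT f (-g) = -mulT f g := by
  funext w; simp [mulT]

lemma mulT_sub_left (f g h : T n) : mulT (f - g) h = mulT f h - mulT g h := by
  rw [sub_eq_add_neg, mulT_add_left, mulT_neg_left, ← sub_eq_add_neg]

lemma mulT_sub_right (f g h : T n) : mulT f (g - h) = mulT f g - mulT f h := by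
  rw [sub_eq_add_neg, mulT_add_right, mulT_neg_right, ← sub_eq_add_neg]

lemma mulT_smul_left (c : ℚ) (f g : T n) : mulT (c • f) g = c • mulT f g := by
  funext w
  simp only [mulT, Pi.smul_apply, smul_eq_mul, Finset.mul_sum]
  exact Finset.sum_congr rfl fun i _ => by ring

lemma mulT_smul_right (c : ℚ) (f g : T n) : mulT f (c • g) = c • mulT f g := by
  funext w
  simp only [mulT, Pi.smul_apply, smul_eq_mul, Finset.mul_sum]
  exact Finset.sum_congr rfl fun i _ => by ring

lemma mulT_sum_left {ι : Type*} (s : Finset ι) (F : ι → T n) (g : T n) :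
    mulT (∑ i ∈ s, F i) g = ∑ i ∈ s, mulT (F i) g := by
  funext w
  simp only [mulT, Finset.sum_apply, Finset.sum_mul]
  rw [Finset.sum_comm]

lemma mulT_sum_right {ι : Type*} (s : Finset ι) (f : T n) (F : ι → T n) :
    mulT f (∑ i ∈ s, F i) = ∑ i ∈ s, mulT f (F i) := by
  funext w
  simp only [mulT, Finset.sum_apply, Finset.mul_sum]
  rw [Finset.sum_comm]

lemma mulT_zero (f : T n) : mulT f 0 = 0 := by funext w; simp [mulT]
lemma zero_mulT (f : T n) : mulT 0 f = 0 := by funext w; simp [mulT]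

-- PART 2
lemma mulT_apply_nil (f g : T n) : mulT f g [] = f [] * g [] := by
  simp [mulT]

lemma dia_apply_nil (f g : T n) : dia f g [] = 0 := by simp [dia]

lemma sum_xgen_apply (w : Word n) : (∑ k : Fin n, xgen k) w = if w.length = 1 then 1 else 0 := by
  rw [Finset.sum_apply]
  match w with
  | [] => simp [xgen]
  | [a] =>
    have h1 : ∀ k : Fin n, (xgen k ([a] : Word n)) = if k = a then (1:ℚ) else 0 := by
      intro k
      by_cases h : k = a
      · subst h; simp [xgen]
      · have h' : a ≠ k := fun hc => h hc.symm
        simp [xgen, h, h']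
    rw [Finset.sum_congr rfl fun k _ => h1 k, Finset.sum_ite_eq' Finset.univ a]
    simp
  | a :: b :: t => simp [xgen]

lemma x0_apply (w : Word n) : x0 n w = if w.length = 1 then -1 else 0 := by
  rw [x0, Pi.neg_apply, sum_xgen_apply]
  split <;> simp

lemma x0_apply_nil : x0 n [] = 0 := by simp [x0_apply]

lemma dia_add_left (f g h : T n) : dia (f + g) h = dia f h + dia g h := by
  funext w; simp [dia, add_mul, Finset.sum_add_distrib]; ring

lemma dia_neg_left (f g : T n) : dia (-f) g = -dia f g := by
  funext w; simp [dia]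

lemma dia_sub_left (f g h : T n) : dia (f - g) h = dia f h - dia g h := by
  rw [sub_eq_add_neg, dia_add_left, dia_neg_left, ← sub_eq_add_neg]

lemma dia_sum_left {ι : Type*} (s : Finset ι) (F : ι → T n) (g : T n) :
    dia (∑ i ∈ s, F i) g = ∑ i ∈ s, dia (F i) g := by
  funext w
  simp only [dia, Finset.sum_apply, Finset.sum_mul, ← Finset.sum_neg_distrib]
  rw [Finset.sum_comm]

lemma dia_x0_left (f : T n) (hf : f [] = 0) : dia (x0 n) f = f := by
  funext w
  by_cases hw : w = []
  · subst hw; simp [dia, hf]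
  · have hL : 0 < w.length := List.length_pos_iff.mpr hw
    have key : ∀ i ∈ Finset.range w.length, x0 n (w.take (i+1)) * f (w.drop i)
        = if i = 0 then -f w else 0 := by
      intro i hi
      rw [Finset.mem_range] at hi
      have hlen : (w.take (i+1)).length = i + 1 := by
        rw [List.length_take]; omega
      rw [x0_apply, hlen]
      by_cases h : i = 0
      · subst h; simp
      · have h2 : ¬ (i + 1 = 1) := by omega
        simp [h2, h]
    rw [dia, Finset.sum_congr rfl key, Finset.sum_ite_eq' (Finset.range w.length) 0]
    simp [hL]

lemma dia_x0_right (f : T n) (hf : f [] = 0) : dia f (x0 n) = f := by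
  funext w
  by_cases hw : w = []
  · subst hw; simp [dia, hf]
  · have hL : 0 < w.length := List.length_pos_iff.mpr hw
    have key : ∀ i ∈ Finset.range w.length, f (w.take (i+1)) * x0 n (w.drop i)
        = if i = w.length - 1 then -f w else 0 := by
      intro i hi
      rw [Finset.mem_range] at hi
      have hlen : (w.drop i).length = w.length - i := by rw [List.length_drop]
      rw [x0_apply, hlen]
      by_cases h : i = w.length - 1
      · have h1 : w.length - i = 1 := by omega
        have h2 : w.take (i+1) = w := by
          apply List.take_of_length_le; omega
        rw [if_pos h1, if_pos h, h2]; ring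
      · have h2 : ¬ (w.length - i = 1) := by omega
        simp [h2, h]
    rw [dia, Finset.sum_congr rfl key, Finset.sum_ite_eq' (Finset.range w.length) (w.length - 1)]
    have hmem : w.length - 1 ∈ Finset.range w.length := by
      rw [Finset.mem_range]; omega
    simp [hmem]

lemma dia_assoc (f g h : T n) : dia (dia f g) h = dia f (dia g h) := by
  funext w
  have step1 : ∀ j ∈ Finset.range w.length, (dia f g) (w.take (j+1)) * h (w.drop j)
      = -∑ i ∈ Finset.range (j+1),
          f (w.take (i+1)) * (g ((w.drop i).take (j+1-i)) * h (w.drop j)) := by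
    intro j hj
    rw [Finset.mem_range] at hj
    have hlen : (w.take (j+1)).length = j + 1 := by rw [List.length_take]; omega
    rw [dia, hlen, neg_mul, Finset.sum_mul]
    congr 1
    refine Finset.sum_congr rfl fun i hi => ?_
    rw [Finset.mem_range, Nat.lt_succ_iff] at hi
    rw [List.take_take, min_eq_left (by omega), List.drop_take, mul_assoc]
  have step2 : ∀ i ∈ Finset.range w.length, f (w.take (i+1)) * (dia g h) (w.drop i)
      = -∑ d ∈ Finset.range (w.length - i),
          f (w.take (i+1)) * (g ((w.drop i).take (d+1)) * h (w.drop (i+d))) := by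
    intro i hi
    rw [dia, List.length_drop, mul_neg, Finset.mul_sum]
    simp only [List.drop_drop]
  show -∑ j ∈ Finset.range w.length, (dia f g) (w.take (j+1)) * h (w.drop j)
      = -∑ i ∈ Finset.range w.length, f (w.take (i+1)) * (dia g h) (w.drop i)
  rw [Finset.sum_congr rfl step1, Finset.sum_congr rfl step2]
  simp only [Finset.sum_neg_distrib, neg_neg]
  rw [sum_triangle]
  refine Finset.sum_congr rfl fun i hi => Finset.sum_congr rfl fun d hd => ?_
  have harith : i + d + 1 - i = d + 1 := by omega
  rw [harith]

lemma dia_mulT_left (F g h : T n) (hg : g [] = 0) :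
    dia (mulT F g) h = mulT F (dia g h) := by
  funext w
  have step1 : ∀ i ∈ Finset.range w.length, (mulT F g) (w.take (i+1)) * h (w.drop i)
      = ∑ j ∈ Finset.range (i+1),
          F (w.take j) * (g ((w.drop j).take (i+1-j)) * h (w.drop i)) := by
    intro i hi
    rw [Finset.mem_range] at hi
    have hlen : (w.take (i+1)).length = i+1 := by rw [List.length_take]; omega
    rw [mulT, hlen, Finset.sum_mul, Finset.sum_range_succ]
    have hz : (w.take (i+1)).drop (i+1) = [] := by
      apply List.drop_eq_nil_of_le; rw [hlen]
    rw [hz, hg, mul_zero, zero_mul, add_zero]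
    refine Finset.sum_congr rfl fun j hj => ?_
    rw [Finset.mem_range, Nat.lt_succ_iff] at hj
    rw [List.take_take, min_eq_left (by omega), List.drop_take, mul_assoc]
  have rhs_eq : mulT F (dia g h) w
      = -∑ j ∈ Finset.range w.length, ∑ d ∈ Finset.range (w.length - j),
          F (w.take j) * (g ((w.drop j).take (d+1)) * h (w.drop (j+d))) := by
    rw [mulT, Finset.sum_range_succ]
    have hz : w.drop w.length = [] := by
      apply List.drop_eq_nil_of_le; exact le_refl _
    rw [hz, dia_apply_nil, mul_zero, add_zero]
    have inner : ∀ j ∈ Finset.range w.length, F (w.take j) * (dia g h) (w.drop j)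
        = -∑ d ∈ Finset.range (w.length - j),
            F (w.take j) * (g ((w.drop j).take (d+1)) * h (w.drop (j+d))) := by
      intro j hj
      rw [dia, List.length_drop, mul_neg, Finset.mul_sum]
      simp only [List.drop_drop]
    rw [Finset.sum_congr rfl inner, Finset.sum_neg_distrib]
  rw [rhs_eq, dia, Finset.sum_congr rfl step1, sum_triangle]
  congr 1
  refine Finset.sum_congr rfl fun j hj => Finset.sum_congr rfl fun d hd => ?_
  have harith : j + d + 1 - j = d + 1 := by omega
  rw [harith]

def Dk {n : ℕ} (k : Fin n) (f : T n) : T n := fun w => f (k :: w)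

lemma mulT_xgen_cons (k : Fin n) (g : T n) (a : Fin n) (t : Word n) :
    mulT (xgen k) g (a :: t) = if a = k then g t else 0 := by
  have key : ∀ i ∈ Finset.range ((a::t).length + 1), xgen k ((a::t).take i) * g ((a::t).drop i)
      = if i = 1 then (if a = k then g t else 0) else 0 := by
    intro i hi
    rw [Finset.mem_range] at hi
    match i with
    | 0 => simp [xgen]
    | (i'+1) =>
      rw [List.take_succ_cons, List.drop_succ_cons]
      by_cases hi' : i' = 0
      · subst hi'
        simp only [List.take_zero, List.drop_zero]
        by_cases h : a = k <;> simp [xgen, h]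
      · have h2 : a :: t.take i' ≠ [k] := by
          intro hc
          have := congrArg List.length hc
          rw [List.length_cons, List.length_take, List.length_cons, List.length_nil] at this
          have h3 : min i' t.length = 0 := by omega
          rw [List.length_cons] at hi
          rcases Nat.min_eq_zero_iff.mp h3 with h' | h'
          · exact hi' h'
          · omega
        have h4 : (i' + 1 = 1) = False := by simp [hi']
        simp [xgen, h2, h4, hi']
  rw [mulT, Finset.sum_congr rfl key, Finset.sum_ite_eq' _ 1]
  simp

lemma dia_xgen_left (k : Fin n) (f : T n) :
    dia (xgen k) f = -mulT (xgen k) (Dk k f) := by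
  funext w
  match w with
  | [] => simp [dia, mulT, xgen]
  | a :: t =>
    rw [Pi.neg_apply, mulT_xgen_cons]
    have key : ∀ i ∈ Finset.range (a::t).length, xgen k ((a::t).take (i+1)) * f ((a::t).drop i)
        = if i = 0 then (if a = k then f (a::t) else 0) else 0 := by
      intro i hi
      rw [Finset.mem_range] at hi
      match i with
      | 0 =>
        simp only [List.take_succ_cons, List.take_zero, List.drop_zero]
        by_cases h : a = k <;> simp [xgen, h]
      | (i'+1) =>
        rw [List.take_succ_cons]
        have h2 : a :: (t.take (i'+1)) ≠ [k] := by
          intro hc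
          have := congrArg List.length hc
          rw [List.length_cons, List.length_take, List.length_cons, List.length_nil] at this
          have h3 : min (i'+1) t.length = 0 := by omega
          rw [List.length_cons] at hi
          rcases Nat.min_eq_zero_iff.mp h3 with h' | h'
          · omega
          · omega
        simp [xgen, h2]
    rw [dia, Finset.sum_congr rfl key, Finset.sum_ite_eq' _ 0]
    have hmem : 0 ∈ Finset.range (a::t).length := by simp
    rw [if_pos hmem]
    by_cases h : a = k
    · subst h; simp [Dk]
    · simp [h]

lemma first_letter_decomp (f : T n) (hf : f [] = 0) :
    f = ∑ k : Fin n, mulT (xgen k) (Dk k f) := by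
  funext w
  rw [Finset.sum_apply]
  match w with
  | [] =>
    rw [hf]
    symm
    apply Finset.sum_eq_zero
    intro k _
    rw [mulT_apply_nil]
    simp [xgen]
  | a :: t =>
    have key : ∀ k : Fin n, mulT (xgen k) (Dk k f) (a :: t)
        = if k = a then f (a :: t) else 0 := by
      intro k
      rw [mulT_xgen_cons]
      by_cases h : a = k
      · subst h; simp [Dk]
      · have h' : ¬ (k = a) := fun hc => h hc.symm
        simp [h, h']
    rw [Finset.sum_congr rfl fun k _ => key k, Finset.sum_ite_eq' Finset.univ a]
    simp
-- PART 3
lemma powT_add (a : T n) (i j : ℕ) : powT a (i + j) = mulT (powT a i) (powT a j) := by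
  induction i with
  | zero => rw [Nat.zero_add]; exact (one_mulT _).symm
  | succ i ih =>
    have : i + 1 + j = (i + j) + 1 := by omega
    rw [this]
    show mulT a (powT a (i+j)) = mulT (mulT a (powT a i)) (powT a j)
    rw [ih, mulT_assoc]

lemma powT_eq_zero (a : T n) (ha : a [] = 0) (m : ℕ) (w : Word n) (hw : w.length < m) :
    powT a m w = 0 := by
  induction m generalizing w with
  | zero => omega
  | succ m ih =>
    show mulT a (powT a m) w = 0
    rw [mulT]
    apply Finset.sum_eq_zero
    intro i hi
    rw [Finset.mem_range] at hi
    match i with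
    | 0 => rw [List.take_zero, ha, zero_mul]
    | (i'+1) =>
      have hlen : (w.drop (i'+1)).length < m := by
        rw [List.length_drop]; omega
      rw [ih _ hlen, mul_zero]

lemma substT_apply_nil (F : PowerSeries ℚ) (a : T n) :
    substT F a [] = PowerSeries.coeff 0 F := by
  simp [substT, powT, oneT]

lemma substT_stable (F : PowerSeries ℚ) (a : T n) (ha : a [] = 0) (w : Word n) (N : ℕ)
    (hN : w.length ≤ N) :
    substT F a w = ∑ m ∈ Finset.range (N + 1), PowerSeries.coeff m F * powT a m w := by
  rw [substT]
  apply Finset.sum_subset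
  · intro m hm
    rw [Finset.mem_range] at hm ⊢
    omega
  · intro m _ hm
    rw [Finset.mem_range] at hm
    rw [powT_eq_zero a ha m w (by omega), mul_zero]

lemma substT_add (F G : PowerSeries ℚ) (a : T n) :
    substT (F + G) a = substT F a + substT G a := by
  funext w
  simp [substT, add_mul, Finset.sum_add_distrib]

lemma substT_neg (F : PowerSeries ℚ) (a : T n) : substT (-F) a = -substT F a := by
  funext w; simp [substT]

lemma substT_sub (F G : PowerSeries ℚ) (a : T n) :
    substT (F - G) a = substT F a - substT G a := by
  rw [sub_eq_add_neg, substT_add, substT_neg, ← sub_eq_add_neg]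

lemma substT_one (a : T n) : substT 1 a = oneT := by
  funext w
  rw [substT, Finset.sum_eq_single 0]
  · simp [powT]
  · intro m _ hm
    rw [PowerSeries.coeff_one, if_neg hm, zero_mul]
  · intro h
    simp at h

lemma substT_X (a : T n) (ha : a [] = 0) : substT PowerSeries.X a = a := by
  funext w
  by_cases hw : w = []
  · subst hw
    rw [substT_apply_nil, PowerSeries.coeff_zero_X, ha]
  · have hL : 0 < w.length := List.length_pos_iff.mpr hw
    rw [substT, Finset.sum_eq_single 1]
    · rw [PowerSeries.coeff_one_X, one_mul]
      show mulT a oneT w = a w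
      rw [mulT_one]
    · intro m _ hm
      rw [PowerSeries.coeff_X, if_neg hm, zero_mul]
    · intro h
      rw [Finset.mem_range] at h
      omega

lemma substT_smul (c : ℚ) (F : PowerSeries ℚ) (a : T n) :
    substT (c • F) a = c • substT F a := by
  funext w
  simp only [substT, Pi.smul_apply, smul_eq_mul, Finset.mul_sum, map_smul]
  exact Finset.sum_congr rfl fun m _ => by ring

lemma substT_mul (F G : PowerSeries ℚ) (a : T n) (ha : a [] = 0) :
    substT (F * G) a = mulT (substT F a) (substT G a) := by
  funext w
  set N := w.length with hN
  have lhs_eq : substT (F * G) a w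
      = ∑ m ∈ Finset.range (N+1), ∑ p ∈ Finset.range (m+1),
          PowerSeries.coeff p F * PowerSeries.coeff (m - p) G * powT a m w := by
    rw [substT]
    refine Finset.sum_congr rfl fun m _ => ?_
    rw [PowerSeries.coeff_mul, Finset.Nat.sum_antidiagonal_eq_sum_range_succ
      (fun p q => PowerSeries.coeff p F * PowerSeries.coeff q G), Finset.sum_mul]
  have rhs_eq : mulT (substT F a) (substT G a) w
      = ∑ j ∈ Finset.range (N+1), ∑ p ∈ Finset.range (N+1), ∑ q ∈ Finset.range (N+1),
          PowerSeries.coeff p F * PowerSeries.coeff q G *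
            (powT a p (w.take j) * powT a q (w.drop j)) := by
    rw [mulT]
    refine Finset.sum_congr rfl fun j hj => ?_
    rw [Finset.mem_range] at hj
    rw [substT_stable F a ha (w.take j) N (by rw [List.length_take]; omega),
        substT_stable G a ha (w.drop j) N (by rw [List.length_drop]; omega),
        Finset.sum_mul_sum]
    exact Finset.sum_congr rfl fun p _ => Finset.sum_congr rfl fun q _ => by ring
  rw [lhs_eq, rhs_eq]
  -- reorder rhs: sum over j innermost
  rw [Finset.sum_comm]
  have rhs2 : ∀ p ∈ Finset.range (N+1),
      (∑ j ∈ Finset.range (N+1), ∑ q ∈ Finset.range (N+1),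
        PowerSeries.coeff p F * PowerSeries.coeff q G *
          (powT a p (w.take j) * powT a q (w.drop j)))
      = ∑ q ∈ Finset.range (N+1),
          PowerSeries.coeff p F * PowerSeries.coeff q G * powT a (p + q) w := by
    intro p _
    rw [Finset.sum_comm]
    refine Finset.sum_congr rfl fun q _ => ?_
    rw [← Finset.mul_sum]
    congr 1
    rw [powT_add, mulT]
  rw [Finset.sum_congr rfl rhs2]
  -- now lhs: triangle reindex
  rw [sum_triangle]
  refine Finset.sum_congr rfl fun p hp => ?_
  rw [Finset.mem_range] at hp
  -- lhs inner: ∑ d ∈ range (N+1-p), F_p G_(p+d-p) powT a (p+d) w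
  -- rhs inner: ∑ q ∈ range (N+1), F_p G_q powT a (p+q) w ; extra terms vanish
  symm
  rw [← Finset.sum_subset (Finset.range_subset_range.mpr (by omega : N+1-p ≤ N+1))]
  · refine Finset.sum_congr rfl fun d hd => ?_
    have : p + d - p = d := by omega
    rw [this]
  · intro q _ hq
    rw [Finset.mem_range] at hq
    rw [powT_eq_zero a ha (p+q) w (by omega), mul_zero]

noncomputable def shiftS (F : PowerSeries ℚ) : PowerSeries ℚ :=
  PowerSeries.mk fun m => PowerSeries.coeff (m+1) F

lemma powT_xgen (k : Fin n) (m : ℕ) (w : Word n) :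
    powT (xgen k) m w = if w = List.replicate m k then 1 else 0 := by
  induction m generalizing w with
  | zero =>
    show oneT w = _
    rw [List.replicate_zero, oneT_apply]
  | succ m ih =>
    show mulT (xgen k) (powT (xgen k) m) w = _
    cases w with
    | nil =>
      rw [mulT_apply_nil]
      have : xgen k ([] : Word n) = 0 := by simp [xgen]
      rw [this, zero_mul]
      have : ([] : Word n) ≠ List.replicate (m+1) k := by
        simp [List.replicate_succ]
      rw [if_neg this]
    | cons a t =>
      rw [mulT_xgen_cons, List.replicate_succ]
      by_cases h : a = k
      · rw [if_pos h, ih, h]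
        by_cases ht : t = List.replicate m k
        · rw [if_pos ht, if_pos (by rw [ht])]
        · rw [if_neg ht, if_neg (by simp [ht])]
      · rw [if_neg h, if_neg (by simp [h])]

lemma substT_xgen_apply (F : PowerSeries ℚ) (k : Fin n) (w : Word n) :
    substT F (xgen k) w
      = if w = List.replicate w.length k then PowerSeries.coeff w.length F else 0 := by
  rw [substT, Finset.sum_eq_single w.length]
  · rw [powT_xgen]
    split <;> simp
  · intro m _ hm
    rw [powT_xgen]
    have : w ≠ List.replicate m k := by
      intro hc
      apply hm
      rw [hc, List.length_replicate]
    rw [if_neg this, mul_zero]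
  · intro h
    simp at h

lemma xgen_apply_nil (k : Fin n) : xgen k [] = 0 := by simp [xgen]

lemma Dk_substT_xgen (k l : Fin n) (F : PowerSeries ℚ) :
    Dk k (substT F (xgen l)) = if k = l then substT (shiftS F) (xgen k) else 0 := by
  funext w
  rw [Dk, substT_xgen_apply]
  by_cases h : k = l
  · subst h
    rw [if_pos rfl, substT_xgen_apply]
    simp only [List.length_cons, List.replicate_succ, List.cons_eq_cons]
    by_cases hw : w = List.replicate w.length k
    · rw [if_pos ⟨trivial, hw⟩, if_pos hw, shiftS, PowerSeries.coeff_mk]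
    · rw [if_neg (by tauto), if_neg hw]
  · rw [if_neg h, Pi.zero_apply]
    have : (k :: w) ≠ List.replicate (k :: w).length l := by
      rw [List.length_cons, List.replicate_succ]
      simp [h]
    rw [if_neg this]
-- PART 4
lemma Dk_mulT (k : Fin n) (f g : T n) :
    Dk k (mulT f g) = f [] • Dk k g + mulT (Dk k f) g := by
  funext w
  show mulT f g (k :: w) = _
  rw [mulT]
  have hlen : (k :: w).length + 1 = (w.length + 1) + 1 := by simp
  rw [hlen, Finset.sum_range_succ']
  simp only [List.take_zero, List.drop_zero, List.take_succ_cons, List.drop_succ_cons]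
  rw [add_comm]
  rfl

lemma Dk_add (k : Fin n) (f g : T n) : Dk k (f + g) = Dk k f + Dk k g := rfl
lemma Dk_neg (k : Fin n) (f : T n) : Dk k (-f) = -Dk k f := rfl

lemma Dk_powT (k : Fin n) (a : T n) (ha : a [] = 0) (m : ℕ) :
    Dk k (powT a (m+1)) = mulT (Dk k a) (powT a m) := by
  show Dk k (mulT a (powT a m)) = _
  rw [Dk_mulT, ha, zero_smul, zero_add]

lemma Dk_substT (k : Fin n) (F : PowerSeries ℚ) (a : T n) (ha : a [] = 0) :
    Dk k (substT F a) = mulT (Dk k a) (substT (shiftS F) a) := by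
  funext w
  show substT F a (k :: w) = _
  rw [substT]
  have hlen : (k :: w).length + 1 = (w.length + 1) + 1 := by simp
  rw [hlen, Finset.sum_range_succ']
  have hz : powT a 0 (k :: w) = 0 := by simp [powT, oneT]
  rw [hz, mul_zero, add_zero]
  have key : ∀ m ∈ Finset.range (w.length + 1),
      PowerSeries.coeff (m+1) F * powT a (m+1) (k :: w)
      = ∑ i ∈ Finset.range (w.length + 1),
          Dk k a (w.take i) * (PowerSeries.coeff (m+1) F * powT a m (w.drop i)) := by
    intro m _
    have : powT a (m+1) (k :: w) = mulT (Dk k a) (powT a m) w := by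
      rw [← Dk_powT k a ha m]; rfl
    rw [this, mulT, Finset.mul_sum]
    exact Finset.sum_congr rfl fun i _ => by ring
  rw [Finset.sum_congr rfl key, Finset.sum_comm]
  rw [mulT]
  refine Finset.sum_congr rfl fun i hi => ?_
  rw [Finset.mem_range] at hi
  rw [substT_stable (shiftS F) a ha (w.drop i) w.length (by rw [List.length_drop]; omega),
      Finset.mul_sum]
  refine Finset.sum_congr rfl fun m _ => ?_
  rw [shiftS, PowerSeries.coeff_mk]

lemma powT_substT (G : PowerSeries ℚ) (a : T n) (ha : a [] = 0) (m : ℕ) :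
    powT (substT G a) m = substT (G ^ m) a := by
  induction m with
  | zero => rw [pow_zero]; exact (substT_one a).symm
  | succ m ih =>
    show mulT (substT G a) (powT (substT G a) m) = _
    rw [ih, ← substT_mul _ _ a ha, ← pow_succ']

lemma coeff_pow_eq_zero {G : PowerSeries ℚ} (hG : PowerSeries.coeff 0 G = 0)
    {j m : ℕ} (h : j < m) : PowerSeries.coeff j (G ^ m) = 0 := by
  have hdvd : (PowerSeries.X : PowerSeries ℚ) ∣ G := by
    rw [PowerSeries.X_dvd_iff, ← PowerSeries.coeff_zero_eq_constantCoeff_apply]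
    exact hG
  have hdvd2 : (PowerSeries.X : PowerSeries ℚ) ^ m ∣ G ^ m := pow_dvd_pow_of_dvd hdvd m
  exact PowerSeries.X_pow_dvd_iff.mp hdvd2 j h

noncomputable def compS (G F : PowerSeries ℚ) : PowerSeries ℚ :=
  PowerSeries.mk fun j => ∑ m ∈ Finset.range (j+1),
    PowerSeries.coeff m F * PowerSeries.coeff j (G ^ m)

lemma substT_substT (F G : PowerSeries ℚ) (a : T n) (ha : a [] = 0)
    (hG : PowerSeries.coeff 0 G = 0) :
    substT F (substT G a) = substT (compS G F) a := by
  funext w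
  set b := substT G a with hb
  have hb0 : b [] = 0 := by rw [hb, substT_apply_nil]; exact hG
  rw [substT, substT]
  have key : ∀ m ∈ Finset.range (w.length + 1),
      PowerSeries.coeff m F * powT b m w
      = ∑ j ∈ Finset.range (w.length + 1),
          PowerSeries.coeff m F * PowerSeries.coeff j (G ^ m) * powT a j w := by
    intro m _
    rw [hb, powT_substT G a ha m, substT, Finset.mul_sum]
    exact Finset.sum_congr rfl fun j _ => by ring
  rw [Finset.sum_congr rfl key, Finset.sum_comm]
  refine Finset.sum_congr rfl fun j hj => ?_
  rw [Finset.mem_range] at hj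
  rw [compS, PowerSeries.coeff_mk, Finset.sum_mul]
  symm
  apply Finset.sum_subset (Finset.range_subset_range.mpr (by omega : j + 1 ≤ w.length + 1))
  intro m _ hm
  rw [Finset.mem_range] at hm
  rw [coeff_pow_eq_zero hG (by omega), mul_zero, zero_mul]
-- PART 5 : series identities
open PowerSeries in
lemma coeff_logSeries (m : ℕ) :
    PowerSeries.coeff m logSeries = if m = 0 then 0 else (-1 : ℚ)^(m+1)/(m : ℚ) := by
  rw [logSeries, coeff_mk]

lemma coeff_logSeries_zero : PowerSeries.coeff 0 logSeries = 0 := by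
  rw [coeff_logSeries]; simp

lemma coeff_logSeries_one : PowerSeries.coeff 1 logSeries = 1 := by
  rw [coeff_logSeries]; norm_num

open PowerSeries in
lemma derivative_logSeries :
    d⁄dX ℚ logSeries = PowerSeries.mk fun m => (-1 : ℚ)^m := by
  ext m
  rw [coeff_derivative, coeff_mk, coeff_logSeries]
  have h1 : ((m:ℚ)+1) ≠ 0 := by positivity
  have h2 : (m+1 : ℕ) ≠ 0 := by omega
  rw [if_neg h2]
  push_cast
  rw [div_mul_cancel₀ _ h1, pow_succ, pow_succ]
  ring

open PowerSeries in
lemma one_add_X_mul_dlog : ((1 : PowerSeries ℚ) + X) * d⁄dX ℚ logSeries = 1 := by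
  rw [derivative_logSeries]
  ext j
  rw [add_mul, one_mul, map_add]
  match j with
  | 0 => rw [coeff_zero_X_mul, coeff_mk]; simp
  | (j'+1) =>
    rw [coeff_succ_X_mul, coeff_mk, coeff_mk, coeff_one, if_neg (by omega : ¬ (j'+1 = 0)),
      pow_succ]
    ring

open PowerSeries in
lemma one_add_X_mul_dpow (m : ℕ) :
    ((1 : PowerSeries ℚ) + X) * d⁄dX ℚ (logSeries^(m+1)) = ((m:ℚ)+1) • logSeries^m := by
  induction m with
  | zero =>
    rw [pow_one, one_add_X_mul_dlog]
    norm_num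
  | succ m ih =>
    rw [pow_succ' logSeries (m+1), Derivation.leibniz, smul_eq_mul, smul_eq_mul, mul_add]
    have e1 : ((1:PowerSeries ℚ)+X) * (logSeries * (d⁄dX ℚ (logSeries^(m+1))))
        = logSeries * (((m:ℚ)+1) • logSeries^m) := by rw [← ih]; ring
    have e2 : ((1:PowerSeries ℚ)+X) * (logSeries^(m+1) * d⁄dX ℚ logSeries)
        = logSeries^(m+1) := by
      rw [mul_comm (logSeries^(m+1)) _, ← mul_assoc, one_add_X_mul_dlog, one_mul]
    rw [e1, e2, mul_smul_comm, ← pow_succ']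
    push_cast
    module

lemma coeff_exp_rat (m : ℕ) :
    PowerSeries.coeff m (PowerSeries.exp ℚ) = 1 / (m.factorial : ℚ) := by
  rw [PowerSeries.coeff_exp]; simp

lemma exp_coeff_succ_mul (m : ℕ) :
    (PowerSeries.coeff (m+1) (PowerSeries.exp ℚ)) * ((m:ℚ)+1)
      = PowerSeries.coeff m (PowerSeries.exp ℚ) := by
  rw [coeff_exp_rat, coeff_exp_rat, Nat.factorial_succ]
  have h1 : ((m:ℚ)+1) ≠ 0 := by positivity
  have h2 : ((m.factorial : ℚ)) ≠ 0 := Nat.cast_ne_zero.mpr m.factorial_ne_zero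
  push_cast
  field_simp

noncomputable def Yser : PowerSeries ℚ := compS logSeries (PowerSeries.exp ℚ)

lemma coeff_Yser (j : ℕ) : PowerSeries.coeff j Yser
    = ∑ m ∈ Finset.range (j+1),
        PowerSeries.coeff m (PowerSeries.exp ℚ) * PowerSeries.coeff j (logSeries^m) := by
  rw [Yser, compS, PowerSeries.coeff_mk]

lemma Yser_zero : PowerSeries.coeff 0 Yser = 1 := by
  rw [coeff_Yser]
  simp [PowerSeries.coeff_exp]

lemma Yser_one : PowerSeries.coeff 1 Yser = 1 := by
  rw [coeff_Yser, Finset.sum_range_succ, Finset.sum_range_succ, Finset.sum_range_zero]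
  rw [pow_zero, pow_one, coeff_logSeries_one]
  simp [PowerSeries.coeff_exp]

open PowerSeries in
lemma Yser_rec (j : ℕ) :
    ((j:ℚ)+1) * coeff (j+1) Yser + (j:ℚ) * coeff j Yser = coeff j Yser := by
  have hdagger : ∀ m : ℕ,
      ((j:ℚ)+1) * coeff (j+1) (logSeries^(m+1)) + (j:ℚ) * coeff j (logSeries^(m+1))
        = ((m:ℚ)+1) * coeff j (logSeries^m) := by
    intro m
    have hB : coeff j (((1:PowerSeries ℚ)+X) * d⁄dX ℚ (logSeries^(m+1)))
        = ((m:ℚ)+1) * coeff j (logSeries^m) := by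
      rw [one_add_X_mul_dpow m, map_smul, smul_eq_mul]
    have hA : coeff j (((1:PowerSeries ℚ)+X) * d⁄dX ℚ (logSeries^(m+1)))
        = ((j:ℚ)+1) * coeff (j+1) (logSeries^(m+1)) + (j:ℚ) * coeff j (logSeries^(m+1)) := by
      have hexp : ((1:PowerSeries ℚ)+X) * d⁄dX ℚ (logSeries^(m+1))
          = d⁄dX ℚ (logSeries^(m+1)) + X * d⁄dX ℚ (logSeries^(m+1)) := by ring
      rw [hexp, map_add, coeff_derivative]
      match j with
      | 0 => rw [coeff_zero_X_mul]; push_cast; ring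
      | (j'+1) => rw [coeff_succ_X_mul, coeff_derivative]; push_cast; ring
    rw [← hA, hB]
  have hYj : coeff j Yser
      = ∑ m ∈ Finset.range (j+2), coeff m (exp ℚ) * coeff j (logSeries^m) := by
    rw [coeff_Yser]
    symm
    rw [Finset.sum_range_succ,
      coeff_pow_eq_zero coeff_logSeries_zero (by omega : j < j+1), mul_zero, add_zero]
  have hYj1 : coeff (j+1) Yser
      = ∑ m ∈ Finset.range (j+2), coeff m (exp ℚ) * coeff (j+1) (logSeries^m) :=
    coeff_Yser (j+1)
  rw [hYj, hYj1, Finset.mul_sum, Finset.mul_sum, ← Finset.sum_add_distrib]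
  have lhs_eq : ∀ m ∈ Finset.range (j+2),
      ((j:ℚ)+1) * (coeff m (exp ℚ) * coeff (j+1) (logSeries^m))
        + (j:ℚ) * (coeff m (exp ℚ) * coeff j (logSeries^m))
      = coeff m (exp ℚ) *
          (((j:ℚ)+1) * coeff (j+1) (logSeries^m) + (j:ℚ) * coeff j (logSeries^m)) := by
    intro m _; ring
  rw [Finset.sum_congr rfl lhs_eq, Finset.sum_range_succ']
  -- m = 0 term vanishes
  have hm0 : coeff 0 (exp ℚ) *
      (((j:ℚ)+1) * coeff (j+1) (logSeries^0) + (j:ℚ) * coeff j (logSeries^0)) = 0 := by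
    rw [pow_zero]
    match j with
    | 0 => simp
    | (j'+1) => rw [coeff_one, coeff_one]; simp
  rw [hm0, add_zero]
  have step : ∀ m ∈ Finset.range (j+1),
      coeff (m+1) (exp ℚ) *
        (((j:ℚ)+1) * coeff (j+1) (logSeries^(m+1)) + (j:ℚ) * coeff j (logSeries^(m+1)))
      = coeff m (exp ℚ) * coeff j (logSeries^m) := by
    intro m _
    rw [hdagger m, ← mul_assoc, exp_coeff_succ_mul]
  rw [Finset.sum_congr rfl step]
  symm
  rw [Finset.sum_range_succ,
    coeff_pow_eq_zero coeff_logSeries_zero (by omega : j < j+1), mul_zero, add_zero]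

open PowerSeries in
lemma compS_log_exp : compS logSeries (PowerSeries.exp ℚ) = 1 + X := by
  have hz : ∀ j : ℕ, coeff (j+2) Yser = 0 := by
    intro j
    induction j with
    | zero =>
      have h := Yser_rec 1
      rw [Yser_one] at h
      push_cast at h
      have : (2:ℚ) * coeff 2 Yser = 0 := by linarith
      linarith
    | succ j ih =>
      have h := Yser_rec (j+2)
      rw [ih] at h
      push_cast at h
      have hne : ((j:ℚ)+2+1) ≠ 0 := by positivity
      have : ((j:ℚ)+2+1) * coeff (j+2+1) Yser = 0 := by linarith
      have h2 := mul_eq_zero.mp this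
      rcases h2 with h2 | h2
      · exact absurd h2 hne
      · exact h2
  have : Yser = 1 + X := by
    ext j
    match j with
    | 0 => rw [Yser_zero, map_add, coeff_one, coeff_X]; norm_num
    | 1 => rw [Yser_one, map_add, coeff_one, coeff_X]; norm_num
    | (j+2) =>
      rw [hz j, map_add, coeff_one, coeff_X]
      simp
  exact this

lemma expT_logT (f : T n) (hf : f [] = 1) :
    substT (PowerSeries.exp ℚ) (substT logSeries (f - oneT)) = f := by
  have hb : (f - oneT : T n) ([] : Word n) = 0 := by
    rw [Pi.sub_apply, oneT_apply, hf]; norm_num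
  rw [substT_substT _ _ _ hb coeff_logSeries_zero, compS_log_exp, substT_add, substT_one,
    substT_X _ hb]
  abel
-- PART 6
noncomputable def Psuf (n : ℕ) (j : ℕ) : T n :=
  prodT (((List.finRange n).drop j).map (fun k => expT (xgen k)))

noncomputable def hS : PowerSeries ℚ := shiftS (PowerSeries.exp ℚ)

lemma Psuf_zero : Psuf n 0 = prodT ((List.finRange n).map fun k => expT (xgen k)) := by
  rw [Psuf, List.drop_zero]

lemma Psuf_ge (j : ℕ) (hj : n ≤ j) : Psuf n j = oneT := by
  rw [Psuf, List.drop_eq_nil_of_le (by rw [List.length_finRange]; exact hj)]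
  rfl

lemma Psuf_cons (j : ℕ) (hj : j < n) :
    Psuf n j = mulT (expT (xgen ⟨j, hj⟩)) (Psuf n (j+1)) := by
  rw [Psuf, List.drop_eq_getElem_cons (by rw [List.length_finRange]; exact hj), List.map_cons]
  have hget : (List.finRange n)[j]'(by rw [List.length_finRange]; exact hj) = ⟨j, hj⟩ := by
    simp [List.getElem_finRange, Fin.cast]
  rw [hget]
  rfl

lemma expT_apply_nil (a : T n) : expT a [] = 1 := by
  rw [expT, substT_apply_nil, coeff_exp_rat]
  norm_num

lemma Psuf_apply_nil (j : ℕ) : Psuf n j ([] : Word n) = 1 := by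
  have key : ∀ d j : ℕ, n - j ≤ d → Psuf n j ([] : Word n) = 1 := by
    intro d
    induction d with
    | zero =>
      intro j hj
      rw [Psuf_ge j (by omega), oneT_apply]
      simp
    | succ d ih =>
      intro j hj
      by_cases h : n ≤ j
      · rw [Psuf_ge j h, oneT_apply]; simp
      · rw [Psuf_cons j (by omega), mulT_apply_nil, expT_apply_nil, one_mul]
        exact ih (j+1) (by omega)
  exact key (n - j) j le_rfl

lemma Dk_oneT (k : Fin n) : Dk k (oneT : T n) = 0 := by
  funext w
  show oneT (k :: w) = 0
  rw [oneT_apply, if_neg (by simp)]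

lemma Dk_expT_xgen (k l : Fin n) :
    Dk k (expT (xgen l)) = if k = l then substT hS (xgen k) else 0 := by
  rw [expT, Dk_substT_xgen k l (PowerSeries.exp ℚ)]
  rfl

lemma Dk_Psuf_gt (k : Fin n) (j : ℕ) (h : (k:ℕ) < j) : Dk k (Psuf n j) = 0 := by
  have key : ∀ d j : ℕ, n - j ≤ d → (k:ℕ) < j → Dk k (Psuf n j) = 0 := by
    intro d
    induction d with
    | zero =>
      intro j hj _
      rw [Psuf_ge j (by omega)]
      exact Dk_oneT k
    | succ d ih =>
      intro j hj hkj
      by_cases hn : n ≤ j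
      · rw [Psuf_ge j hn]; exact Dk_oneT k
      · rw [Psuf_cons j (by omega), Dk_mulT, expT_apply_nil, one_smul]
        have hne : k ≠ (⟨j, by omega⟩ : Fin n) := by
          intro hc
          have hval : (k:ℕ) = j := by rw [hc]
          omega
        rw [Dk_expT_xgen, if_neg hne, zero_mulT, add_zero]
        exact ih (j+1) (by omega) (by omega)
  exact key (n - j) j le_rfl h

lemma Dk_Psuf_le (k : Fin n) (j : ℕ) (h : j ≤ (k:ℕ)) :
    Dk k (Psuf n j) = mulT (substT hS (xgen k)) (Psuf n ((k:ℕ)+1)) := by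
  have key : ∀ d j : ℕ, (k:ℕ) - j ≤ d → j ≤ (k:ℕ) →
      Dk k (Psuf n j) = mulT (substT hS (xgen k)) (Psuf n ((k:ℕ)+1)) := by
    intro d
    induction d with
    | zero =>
      intro j hj hjk
      have hjk' : j = (k:ℕ) := by omega
      subst hjk'
      have hjn : ((k:ℕ)) < n := k.isLt
      rw [Psuf_cons _ hjn, Dk_mulT, expT_apply_nil, one_smul]
      have heq : k = (⟨(k:ℕ), hjn⟩ : Fin n) := by
        apply Fin.ext
        rfl
      rw [Dk_expT_xgen, if_pos heq, Dk_Psuf_gt k ((k:ℕ)+1) (by omega), zero_add]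
    | succ d ih =>
      intro j hj hjk
      by_cases hd : (k:ℕ) - j = 0
      · exact ih j (by omega) hjk
      · have hjn : j < n := by have := k.isLt; omega
        rw [Psuf_cons j hjn, Dk_mulT, expT_apply_nil, one_smul]
        have hne : k ≠ (⟨j, hjn⟩ : Fin n) := by
          intro hc
          have hval : (k:ℕ) = j := by rw [hc]
          omega
        rw [Dk_expT_xgen, if_neg hne, zero_mulT, add_zero]
        exact ih (j+1) (by omega) (by omega)
  exact key ((k:ℕ) - j) j le_rfl h

-- series facts
lemma constantCoeff_hS : PowerSeries.constantCoeff hS = 1 := by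
  rw [← PowerSeries.coeff_zero_eq_constantCoeff_apply, hS, shiftS, PowerSeries.coeff_mk,
    coeff_exp_rat]
  norm_num

lemma X_mul_hS : PowerSeries.X * hS = PowerSeries.exp ℚ - 1 := by
  ext j
  match j with
  | 0 =>
    rw [PowerSeries.coeff_zero_X_mul, map_sub, coeff_exp_rat, PowerSeries.coeff_one]
    norm_num
  | (j+1) =>
    rw [PowerSeries.coeff_succ_X_mul, map_sub, PowerSeries.coeff_one, hS, shiftS,
      PowerSeries.coeff_mk, if_neg (by omega : ¬ (j+1 = 0))]
    ring

lemma Eexp_sub_one_ne : (PowerSeries.rescale (-1) (PowerSeries.exp ℚ) - 1) ≠ 0 := by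
  intro hc
  have h1 := congrArg (PowerSeries.coeff 1) hc
  rw [map_sub, PowerSeries.coeff_rescale, coeff_exp_rat, PowerSeries.coeff_one] at h1
  norm_num at h1

lemma exp_mul_E : PowerSeries.exp ℚ * PowerSeries.rescale (-1) (PowerSeries.exp ℚ) = 1 :=
  PowerSeries.exp_mul_exp_neg_eq_one

lemma sX_eq (s g : PowerSeries ℚ) (hs : sSpec s) (hg : gSpec g) :
    s * PowerSeries.X = g + 1 := by
  rw [sSpec] at hs
  rw [gSpec] at hg
  apply mul_right_cancel₀ Eexp_sub_one_ne
  rw [add_mul, one_mul, hg, ← hs]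
  ring

lemma g_mul_hS (g : PowerSeries ℚ) (hg : gSpec g) :
    g * hS = -(PowerSeries.exp ℚ) := by
  rw [gSpec] at hg
  apply mul_right_cancel₀ (PowerSeries.X_ne_zero : (PowerSeries.X : PowerSeries ℚ) ≠ 0)
  have h1 : g * hS * PowerSeries.X = g * (PowerSeries.exp ℚ - 1) := by
    rw [mul_assoc, mul_comm hS PowerSeries.X, X_mul_hS]
  have h2 : g * (PowerSeries.exp ℚ - 1)
      = -(PowerSeries.X * PowerSeries.exp ℚ) := by
    have h3 : (PowerSeries.exp ℚ - 1)
        = -((PowerSeries.rescale (-1) (PowerSeries.exp ℚ) - 1) * PowerSeries.exp ℚ) := by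
      rw [sub_mul, one_mul, mul_comm, exp_mul_E]
      ring
    rw [h3, mul_neg, ← mul_assoc, hg]
  rw [h1, h2]
  ring

lemma q_id (s g : PowerSeries ℚ) (hs : sSpec s) (hg : gSpec g) :
    (s * PowerSeries.X) * (PowerSeries.exp ℚ - 1)
      = PowerSeries.exp ℚ - PowerSeries.X * PowerSeries.exp ℚ - 1 := by
  rw [sX_eq s g hs hg]
  have h2 : g * (PowerSeries.exp ℚ - 1) = -(PowerSeries.X * PowerSeries.exp ℚ) := by
    rw [gSpec] at hg
    have h3 : (PowerSeries.exp ℚ - 1)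
        = -((PowerSeries.rescale (-1) (PowerSeries.exp ℚ) - 1) * PowerSeries.exp ℚ) := by
      rw [sub_mul, one_mul, mul_comm, exp_mul_E]
      ring
    rw [h3, mul_neg, ← mul_assoc, hg]
  rw [add_mul, h2]
  ring

lemma sX2_id (s g : PowerSeries ℚ) (hs : sSpec s) (hg : gSpec g) :
    s * (PowerSeries.X * PowerSeries.X) = PowerSeries.X * g + PowerSeries.X := by
  have h := sX_eq s g hs hg
  have : s * (PowerSeries.X * PowerSeries.X) = (s * PowerSeries.X) * PowerSeries.X := by ring
  rw [this, h]
  ring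
-- PART 7
lemma dia_zero_left (g : T n) : dia 0 g = 0 := by
  funext w; simp [dia]

lemma xi_def : Xi n = substT logSeries (Psuf n 0 - oneT) := by
  rw [Xi, logT, Psuf_zero]

lemma xi_nil : Xi n ([] : Word n) = 0 := by
  rw [xi_def, substT_apply_nil, coeff_logSeries_zero]

lemma expT_xi : substT (PowerSeries.exp ℚ) (Xi n) = Psuf n 0 := by
  rw [xi_def]
  exact expT_logT (Psuf n 0) (Psuf_apply_nil 0)

noncomputable def Hinv (n : ℕ) : T n := substT (hS⁻¹) (Xi n)

lemma HXi_Hinv : mulT (substT hS (Xi n)) (Hinv n) = oneT := by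
  rw [Hinv, ← substT_mul _ _ _ xi_nil,
    PowerSeries.mul_inv_cancel _ (by rw [constantCoeff_hS]; norm_num), substT_one]

lemma Dk_xi_mul (k : Fin n) :
    mulT (Dk k (Xi n)) (substT hS (Xi n))
      = mulT (substT hS (xgen k)) (Psuf n ((k:ℕ)+1)) := by
  have h1 := Dk_substT k (PowerSeries.exp ℚ) (Xi n) xi_nil
  rw [expT_xi, (show shiftS (PowerSeries.exp ℚ) = hS from rfl)] at h1
  rw [← h1]
  exact Dk_Psuf_le k 0 (by omega)

lemma Dk_xi (k : Fin n) :
    Dk k (Xi n) = mulT (substT hS (xgen k)) (mulT (Psuf n ((k:ℕ)+1)) (Hinv n)) := by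
  have h0 : Dk k (Xi n) = mulT (mulT (Dk k (Xi n)) (substT hS (Xi n))) (Hinv n) := by
    rw [mulT_assoc, HXi_Hinv, mulT_one]
  rw [h0, Dk_xi_mul, mulT_assoc]

lemma xgen_mul_hS (k : Fin n) :
    mulT (xgen k) (substT hS (xgen k)) = expT (xgen k) - oneT := by
  have h1 := substT_mul PowerSeries.X hS (xgen k) (xgen_apply_nil k)
  rw [substT_X _ (xgen_apply_nil k)] at h1
  rw [← h1, X_mul_hS, substT_sub, substT_one, expT]

lemma Psuf_cons_fin (k : Fin n) :
    Psuf n (k:ℕ) = mulT (expT (xgen k)) (Psuf n ((k:ℕ)+1)) := by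
  rw [Psuf_cons (k:ℕ) k.isLt]

lemma key_piece (k : Fin n) :
    mulT (xgen k) (Dk k (Xi n))
      = mulT (Psuf n (k:ℕ) - Psuf n ((k:ℕ)+1)) (Hinv n) := by
  rw [Dk_xi, ← mulT_assoc, xgen_mul_hS, mulT_sub_left, mulT_sub_left, one_mulT,
    ← mulT_assoc, ← Psuf_cons_fin]

lemma telescope_psuf :
    ∑ k : Fin n, (Psuf n (k:ℕ) - Psuf n ((k:ℕ)+1)) = Psuf n 0 - oneT := by
  rw [Fin.sum_univ_eq_sum_range (fun i => Psuf n i - Psuf n (i+1)) n,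
    Finset.sum_range_sub' (fun i => Psuf n i), Psuf_ge n le_rfl]

lemma xi_eq : Xi n = mulT (Psuf n 0 - oneT) (Hinv n) := by
  have h1 := first_letter_decomp (Xi n) xi_nil
  rw [Finset.sum_congr rfl (fun k _ => key_piece k), ← mulT_sum_left, telescope_psuf] at h1
  exact h1

lemma g_xi (g : PowerSeries ℚ) (hg : gSpec g) :
    substT g (Xi n) = -mulT (Psuf n 0) (Hinv n) := by
  have h1 : mulT (substT g (Xi n)) (substT hS (Xi n)) = -(Psuf n 0) := by
    rw [← substT_mul _ _ _ xi_nil, g_mul_hS g hg, substT_neg, expT_xi]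
  have h0 : substT g (Xi n)
      = mulT (mulT (substT g (Xi n)) (substT hS (Xi n))) (Hinv n) := by
    rw [mulT_assoc, HXi_Hinv, mulT_one]
  rw [h0, h1, mulT_neg_left]

lemma dia_xgen_neg_xi (l : Fin n) :
    dia (xgen l) (-(Xi n)) = mulT (Psuf n (l:ℕ) - Psuf n ((l:ℕ)+1)) (Hinv n) := by
  rw [dia_xgen_left, Dk_neg, mulT_neg_right, neg_neg, key_piece]

lemma sum_mulT_right_ite {ι : Type*} (s : Finset ι) (c : ι → Prop) [DecidablePred c]
    (F : ι → T n) (h : T n) :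
    ∑ i ∈ s, (if c i then mulT (F i) h else 0) = mulT (∑ i ∈ s, if c i then F i else 0) h := by
  rw [mulT_sum_left]
  refine Finset.sum_congr rfl fun i _ => ?_
  by_cases hc : c i
  · rw [if_pos hc, if_pos hc]
  · rw [if_neg hc, if_neg hc, zero_mulT]

lemma sum_ite_mulT_left {ι : Type*} (s : Finset ι) (c : ι → Prop) [DecidablePred c]
    (h : T n) (F : ι → T n) :
    ∑ i ∈ s, (if c i then mulT h (F i) else 0) = mulT h (∑ i ∈ s, if c i then F i else 0) := by
  rw [mulT_sum_right]
  refine Finset.sum_congr rfl fun i _ => ?_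
  by_cases hc : c i
  · rw [if_pos hc, if_pos hc]
  · rw [if_neg hc, if_neg hc, mulT_zero]

lemma partial_telescope (k : Fin n) :
    ∑ l : Fin n, (if l < k then Psuf n (l:ℕ) - Psuf n ((l:ℕ)+1) else 0)
      = Psuf n 0 - Psuf n (k:ℕ) := by
  have hcond : ∀ l : Fin n, (if l < k then Psuf n (l:ℕ) - Psuf n ((l:ℕ)+1) else 0)
      = (if (l:ℕ) < (k:ℕ) then Psuf n (l:ℕ) - Psuf n ((l:ℕ)+1) else 0) := by
    intro l
    by_cases h : l < k
    · rw [if_pos h, if_pos (by exact h)]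
    · rw [if_neg h, if_neg (by exact h)]
  rw [Finset.sum_congr rfl fun l _ => hcond l,
    Fin.sum_univ_eq_sum_range (fun i => if i < (k:ℕ) then Psuf n i - Psuf n (i+1) else 0) n]
  have hsub : Finset.range (k:ℕ) ⊆ Finset.range n := Finset.range_subset_range.mpr k.isLt.le
  rw [← Finset.sum_subset hsub (fun x _ hx => by
    rw [if_neg (by rw [Finset.mem_range] at hx; omega)])]
  have : ∀ i ∈ Finset.range (k:ℕ),
      (if i < (k:ℕ) then Psuf n i - Psuf n (i+1) else 0) = Psuf n i - Psuf n (i+1) := by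
    intro i hi
    rw [Finset.mem_range] at hi
    rw [if_pos hi]
  rw [Finset.sum_congr rfl this, Finset.sum_range_sub' (fun i => Psuf n i)]

-- PART 8
lemma Psuf_cons_fin' (k : Fin n) :
    Psuf n (k:ℕ) = mulT (substT (PowerSeries.exp ℚ) (xgen k)) (Psuf n ((k:ℕ)+1)) :=
  Psuf_cons_fin k

/-- Main computation (Theorem 3 of the paper): with `V = (-Ξ)⁻¹` the `⋄`-inverse of `-Ξ`,
`V + x₀ s(Ξ) x₀ = x₀ - ∑_{k>l} xₖxₗ + ∑ₖ s(xₖ)xₖ² = -∑_{k>l} xₖxₗ + ∑ₖ xₖ²/(e^{-xₖ}-1)`. -/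
theorem statement11 (n : ℕ) (s g : PowerSeries ℚ) (hs : sSpec s) (hg : gSpec g)
    (V : T n) (hV : degGE 2 (V - x0 n))
    (hV1 : dia (-(Xi n)) V = x0 n) (hV2 : dia V (-(Xi n)) = x0 n) :
    V + mulT (x0 n) (mulT (substT s (Xi n)) (x0 n)) =
      x0 n - (∑ k : Fin n, ∑ l : Fin n, if l < k then mulT (xgen k) (xgen l) else 0)
        + ∑ k : Fin n, mulT (substT s (xgen k)) (powT (xgen k) 2) ∧
    x0 n - (∑ k : Fin n, ∑ l : Fin n, if l < k then mulT (xgen k) (xgen l) else 0)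
        + (∑ k : Fin n, mulT (substT s (xgen k)) (powT (xgen k) 2)) =
      -(∑ k : Fin n, ∑ l : Fin n, if l < k then mulT (xgen k) (xgen l) else 0)
        + ∑ k : Fin n, mulT (xgen k) (substT g (xgen k)) := by
  have hsX : s * PowerSeries.X = g + 1 := sX_eq s g hs hg
  set A := (∑ k : Fin n, ∑ l : Fin n, if l < k then mulT (xgen k) (xgen l) else 0) with hAdef
  set B := (∑ k : Fin n, mulT (substT s (xgen k)) (powT (xgen k) 2)) with hBdef
  set C := mulT (x0 n) (mulT (substT s (Xi n)) (x0 n)) with hCdef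
  -- per-generator identity for the second conjunct
  have hper : ∀ k : Fin n, mulT (substT s (xgen k)) (powT (xgen k) 2)
      = mulT (xgen k) (substT g (xgen k)) + xgen k := by
    intro k
    have h1 : substT (PowerSeries.X * PowerSeries.X) (xgen k) = powT (xgen k) 2 := by
      rw [substT_mul _ _ _ (xgen_apply_nil k), substT_X _ (xgen_apply_nil k)]
      show mulT (xgen k) (xgen k) = mulT (xgen k) (mulT (xgen k) oneT)
      rw [mulT_one]
    have h2 : mulT (substT s (xgen k)) (powT (xgen k) 2)
        = substT (s * (PowerSeries.X * PowerSeries.X)) (xgen k) := by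
      rw [substT_mul _ _ _ (xgen_apply_nil k), h1]
    rw [h2, sX2_id s g hs hg, substT_add, substT_mul _ _ _ (xgen_apply_nil k),
      substT_X _ (xgen_apply_nil k)]
  have conj2 : x0 n - A + B = -A + ∑ k : Fin n, mulT (xgen k) (substT g (xgen k)) := by
    rw [hBdef, Finset.sum_congr rfl fun k _ => hper k, Finset.sum_add_distrib, x0]
    abel
  -- vanishing at the empty word
  have hA0 : A ([] : Word n) = 0 := by
    rw [hAdef, Finset.sum_apply]
    apply Finset.sum_eq_zero
    intro k _
    rw [Finset.sum_apply]
    apply Finset.sum_eq_zero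
    intro l _
    by_cases h : l < k
    · rw [if_pos h, mulT_apply_nil, xgen_apply_nil, zero_mul]
    · rw [if_neg h]; rfl
  have hB0 : B ([] : Word n) = 0 := by
    rw [hBdef, Finset.sum_apply]
    apply Finset.sum_eq_zero
    intro k _
    rw [mulT_apply_nil]
    have hp : powT (xgen k) 2 ([] : Word n) = 0 := by
      rw [powT_xgen]
      rw [if_neg (by simp)]
    rw [hp, mul_zero]
  have hC0 : C ([] : Word n) = 0 := by
    rw [hCdef, mulT_apply_nil, x0_apply_nil, zero_mul]
  have hW0 : (x0 n - A + B - C) ([] : Word n) = 0 := by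
    simp only [Pi.sub_apply, Pi.add_apply, hA0, hB0, hC0, x0_apply_nil]
    norm_num
  have hVnil : V ([] : Word n) = 0 := by
    have h1 := hV ([] : Word n) (by norm_num)
    rw [Pi.sub_apply, x0_apply_nil, sub_zero] at h1
    exact h1
  have hnegXi0 : (-(Xi n) : T n) ([] : Word n) = 0 := by
    rw [Pi.neg_apply, xi_nil, neg_zero]
  have tXi : dia (x0 n) (-(Xi n)) = -(Xi n) := dia_x0_left _ hnegXi0
  -- dia of A
  have t2 : dia A (-(Xi n)) = mulT (∑ k : Fin n, ∑ l : Fin n,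
      if l < k then mulT (xgen k) (Psuf n (l:ℕ) - Psuf n ((l:ℕ)+1)) else 0) (Hinv n) := by
    rw [hAdef, dia_sum_left]
    have step : ∀ k : Fin n,
        dia (∑ l : Fin n, if l < k then mulT (xgen k) (xgen l) else 0) (-(Xi n))
        = ∑ l : Fin n, (if l < k then
            mulT (mulT (xgen k) (Psuf n (l:ℕ) - Psuf n ((l:ℕ)+1))) (Hinv n) else 0) := by
      intro k
      rw [dia_sum_left]
      refine Finset.sum_congr rfl fun l _ => ?_
      by_cases h : l < k
      · rw [if_pos h, if_pos h, dia_mulT_left _ _ _ (xgen_apply_nil l), dia_xgen_neg_xi,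
          ← mulT_assoc]
      · rw [if_neg h, if_neg h, dia_zero_left]
    rw [Finset.sum_congr rfl fun k _ => step k,
      Finset.sum_congr rfl fun k _ =>
        sum_mulT_right_ite Finset.univ (fun l => l < k) _ (Hinv n),
      ← mulT_sum_left]
  -- dia of B
  have t3 : dia B (-(Xi n)) = mulT (∑ k : Fin n,
      mulT (mulT (substT s (xgen k)) (xgen k)) (Psuf n (k:ℕ) - Psuf n ((k:ℕ)+1))) (Hinv n) := by
    rw [hBdef, dia_sum_left]
    have step : ∀ k : Fin n, dia (mulT (substT s (xgen k)) (powT (xgen k) 2)) (-(Xi n))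
        = mulT (mulT (mulT (substT s (xgen k)) (xgen k))
            (Psuf n (k:ℕ) - Psuf n ((k:ℕ)+1))) (Hinv n) := by
      intro k
      have hp2 : powT (xgen k) 2 = mulT (xgen k) (xgen k) := by
        show mulT (xgen k) (mulT (xgen k) oneT) = _
        rw [mulT_one]
      rw [hp2, ← mulT_assoc, dia_mulT_left _ _ _ (xgen_apply_nil k), dia_xgen_neg_xi,
        ← mulT_assoc]
    rw [Finset.sum_congr rfl fun k _ => step k, ← mulT_sum_left]
  -- dia of C
  have t4 : dia C (-(Xi n)) = -(mulT (x0 n) (substT g (Xi n)) + x0 n) := by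
    rw [hCdef, ← mulT_assoc, dia_mulT_left _ _ _ x0_apply_nil, tXi, mulT_neg_right, mulT_assoc]
    have hmul : mulT (substT s (Xi n)) (Xi n) = substT g (Xi n) + oneT := by
      have h1 : substT (s * PowerSeries.X) (Xi n) = mulT (substT s (Xi n)) (Xi n) := by
        rw [substT_mul _ _ _ xi_nil, substT_X _ xi_nil]
      rw [← h1, hsX, substT_add, substT_one]
    rw [hmul, mulT_add_right, mulT_one]
  -- evaluation of the B-side sum
  have hZBk : ∀ k : Fin n,
      mulT (mulT (substT s (xgen k)) (xgen k)) (Psuf n (k:ℕ) - Psuf n ((k:ℕ)+1))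
      = Psuf n (k:ℕ) - mulT (xgen k) (Psuf n (k:ℕ)) - Psuf n ((k:ℕ)+1) := by
    intro k
    have e1 : Psuf n (k:ℕ) - Psuf n ((k:ℕ)+1)
        = mulT (substT (PowerSeries.exp ℚ) (xgen k) - oneT) (Psuf n ((k:ℕ)+1)) := by
      rw [mulT_sub_left, one_mulT, ← Psuf_cons_fin']
    have e2 : mulT (substT s (xgen k)) (xgen k) = substT (s * PowerSeries.X) (xgen k) := by
      rw [substT_mul _ _ _ (xgen_apply_nil k), substT_X _ (xgen_apply_nil k)]
    have e3 : substT (PowerSeries.exp ℚ) (xgen k) - oneT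
        = substT (PowerSeries.exp ℚ - 1) (xgen k) := by
      rw [substT_sub, substT_one]
    rw [e1, ← mulT_assoc, e2, e3, ← substT_mul _ _ _ (xgen_apply_nil k), q_id s g hs hg,
      substT_sub, substT_sub,
      substT_mul PowerSeries.X (PowerSeries.exp ℚ) _ (xgen_apply_nil k),
      substT_X _ (xgen_apply_nil k), substT_one, mulT_sub_left, mulT_sub_left, one_mulT,
      mulT_assoc, ← Psuf_cons_fin']
  have hZB : ∑ k : Fin n,
      mulT (mulT (substT s (xgen k)) (xgen k)) (Psuf n (k:ℕ) - Psuf n ((k:ℕ)+1))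
      = (Psuf n 0 - oneT) - ∑ k : Fin n, mulT (xgen k) (Psuf n (k:ℕ)) := by
    rw [Finset.sum_congr rfl fun k _ => hZBk k]
    have hre : ∀ k : Fin n,
        Psuf n (k:ℕ) - mulT (xgen k) (Psuf n (k:ℕ)) - Psuf n ((k:ℕ)+1)
        = (Psuf n (k:ℕ) - Psuf n ((k:ℕ)+1)) - mulT (xgen k) (Psuf n (k:ℕ)) := by
      intro k; abel
    rw [Finset.sum_congr rfl fun k _ => hre k, Finset.sum_sub_distrib, telescope_psuf]
  have hZA : ∑ k : Fin n, ∑ l : Fin n,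
      (if l < k then mulT (xgen k) (Psuf n (l:ℕ) - Psuf n ((l:ℕ)+1)) else 0)
      = ∑ k : Fin n, (mulT (xgen k) (Psuf n 0) - mulT (xgen k) (Psuf n (k:ℕ))) := by
    refine Finset.sum_congr rfl fun k _ => ?_
    rw [sum_ite_mulT_left Finset.univ (fun l => l < k) (xgen k) _, partial_telescope,
      mulT_sub_right]
  have hx0P : mulT (x0 n) (Psuf n 0) = -∑ k : Fin n, mulT (xgen k) (Psuf n 0) := by
    rw [x0, mulT_neg_left, mulT_sum_left]
  -- the main dia computation
  have hdW : dia (x0 n - A + B - C) (-(Xi n)) = x0 n := by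
    rw [dia_sub_left, dia_add_left, dia_sub_left, tXi, t2, t3, t4]
    have key : -(Xi n)
        - mulT (∑ k : Fin n, ∑ l : Fin n,
            if l < k then mulT (xgen k) (Psuf n (l:ℕ) - Psuf n ((l:ℕ)+1)) else 0) (Hinv n)
        + mulT (∑ k : Fin n,
            mulT (mulT (substT s (xgen k)) (xgen k))
              (Psuf n (k:ℕ) - Psuf n ((k:ℕ)+1))) (Hinv n)
        + mulT (x0 n) (substT g (Xi n)) = 0 := by
      rw [hZA, hZB, g_xi g hg, xi_eq, mulT_neg_right, ← mulT_assoc, hx0P, mulT_neg_left,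
        neg_neg]
      have hlin : ∀ a b c d h : T n,
          -(mulT a h) - mulT b h + mulT c h + mulT d h = mulT (-a - b + c + d) h := by
        intro a b c d h
        rw [mulT_add_left, mulT_add_left, mulT_sub_left, mulT_neg_left]
      rw [hlin]
      have hz : -(Psuf n 0 - oneT)
          - (∑ k : Fin n, (mulT (xgen k) (Psuf n 0) - mulT (xgen k) (Psuf n (k:ℕ))))
          + ((Psuf n 0 - oneT) - ∑ k : Fin n, mulT (xgen k) (Psuf n (k:ℕ)))
          + (∑ k : Fin n, mulT (xgen k) (Psuf n 0)) = 0 := by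
        rw [Finset.sum_sub_distrib]
        abel
      rw [hz, zero_mulT]
    calc -(Xi n)
        - mulT (∑ k : Fin n, ∑ l : Fin n,
            if l < k then mulT (xgen k) (Psuf n (l:ℕ) - Psuf n ((l:ℕ)+1)) else 0) (Hinv n)
        + mulT (∑ k : Fin n,
            mulT (mulT (substT s (xgen k)) (xgen k))
              (Psuf n (k:ℕ) - Psuf n ((k:ℕ)+1))) (Hinv n)
        - -(mulT (x0 n) (substT g (Xi n)) + x0 n)
        = (-(Xi n)
        - mulT (∑ k : Fin n, ∑ l : Fin n,
            if l < k then mulT (xgen k) (Psuf n (l:ℕ) - Psuf n ((l:ℕ)+1)) else 0) (Hinv n)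
        + mulT (∑ k : Fin n,
            mulT (mulT (substT s (xgen k)) (xgen k))
              (Psuf n (k:ℕ) - Psuf n ((k:ℕ)+1))) (Hinv n)
        + mulT (x0 n) (substT g (Xi n))) + x0 n := by abel
      _ = 0 + x0 n := by rw [key]
      _ = x0 n := by abel
  -- uniqueness of the diamond inverse
  have hVW : V = x0 n - A + B - C := by
    have e1 : dia (x0 n - A + B - C) (dia (-(Xi n)) V)
        = dia (x0 n - A + B - C) (x0 n) := by rw [hV1]
    rw [← dia_assoc, hdW, dia_x0_left V hVnil, dia_x0_right _ hW0] at e1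
    exact e1
  constructor
  · rw [hVW]
    abel
  · exact conj2
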